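/- The refinement relation C ≤ D, defined by C ⊆ con[D] (every word of C is a concatenation of words of D), is a partial order on the set of uniquely decipherable codes; in particular, if C ≤ D and D ≤ C for UD codes C and D, then C = D. -/

import Mathlib

open Finset Pointwise

instance {A : Type*} [DecidableEq A] : DecidableEq (FreeMonoid A) :=
  inferInstanceAs (DecidableEq (List A))

/-- A code `C` is uniquely decipherable: the concatenation (product) map is
injective on finite sequences of words from `C`. -/
def IsUD {A : Type*} (C : Finset (FreeMonoid A)) : Prop :=
  ∀ l₁ l₂ : List (FreeMonoid A), (∀ w ∈ l₁, w ∈ C) → (∀ w ∈ l₂, w ∈ C) →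
    l₁.prod = l₂.prod → l₁ = l₂

/-- The Kraft sum of a code over an alphabet of size `r`. -/
noncomputable def Kraft {A : Type*} (r : ℕ) (C : Finset (FreeMonoid A)) : ℝ :=
  ∑ x ∈ C, (r : ℝ) ^ (-(x.length : ℤ))

/-- `D` is finer than `C` (refines `C`): every word of `C` is the concatenation
of a nonempty finite sequence of words from `D`. -/
def Refines {A : Type*} (C D : Finset (FreeMonoid A)) : Prop :=
  ∀ w ∈ C, ∃ l : List (FreeMonoid A), l ≠ [] ∧ (∀ v ∈ l, v ∈ D) ∧ l.prod = w


lemma factor_list {A : Type*} (C : Finset (FreeMonoid A)) (l : List (FreeMonoid A))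
    (h : ∀ v ∈ l, ∃ m : List (FreeMonoid A), m ≠ [] ∧ (∀ u ∈ m, u ∈ C) ∧ m.prod = v) :
    ∃ L : List (List (FreeMonoid A)), (∀ m ∈ L, m ≠ [] ∧ ∀ u ∈ m, u ∈ C) ∧
      L.map List.prod = l := by
  induction l with
  | nil => exact ⟨[], by simp, by simp⟩
  | cons v t ih =>
    obtain ⟨m, hm1, hm2, hm3⟩ := h v (by simp)
    obtain ⟨L, hL1, hL2⟩ := ih (fun v hv => h v (by simp [hv]))
    refine ⟨m :: L, ?_, by simp [hm3, hL2]⟩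
    intro m' hm'
    rcases List.mem_cons.mp hm' with rfl | h
    · exact ⟨hm1, hm2⟩
    · exact hL1 m' h

/-- Refinement is a partial order on UD codes; reflexivity and transitivity hold in
general, and antisymmetry holds for UD codes. -/
theorem stmt_6 {A : Type*} [Fintype A] [DecidableEq A] :
    (∀ C : Finset (FreeMonoid A), (1 : FreeMonoid A) ∉ C → Refines C C) ∧
    (∀ C D E : Finset (FreeMonoid A), (1 : FreeMonoid A) ∉ C → (1 : FreeMonoid A) ∉ D →
      (1 : FreeMonoid A) ∉ E → Refines C D → Refines D E → Refines C E) ∧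
    (∀ C D : Finset (FreeMonoid A), (1 : FreeMonoid A) ∉ C → (1 : FreeMonoid A) ∉ D →
      IsUD C → IsUD D → Refines C D → Refines D C → C = D) := by
  refine ⟨?_, ?_, ?_⟩
  · intro C _ w hw
    exact ⟨[w], by simp, by simpa using hw, by simp⟩
  · intro C D E _ _ _ hCD hDE w hw
    obtain ⟨l, hl1, hl2, hl3⟩ := hCD w hw
    obtain ⟨L, hL1, hL2⟩ := factor_list E l (fun v hv => hDE v (hl2 v hv))
    refine ⟨L.flatten, ?_, ?_, ?_⟩
    · intro hj
      rcases L with _ | ⟨m, L⟩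
      · simp at hL2; exact hl1 hL2
      · have : m = [] := by
          have := List.flatten_eq_nil_iff.mp hj
          exact this m (by simp)
        exact (hL1 m (by simp)).1 this
    · intro u hu
      obtain ⟨m, hm, hu⟩ := List.mem_flatten.mp hu
      exact (hL1 m hm).2 u hu
    · rw [List.prod_flatten, hL2, hl3]
  · intro C D _ _ hC hD hCD hDC
    have key : ∀ (C D : Finset (FreeMonoid A)), IsUD C → Refines C D → Refines D C →
        C ⊆ D := by
      intro C D hC hCD hDC w hw
      obtain ⟨l, hl1, hl2, hl3⟩ := hCD w hw
      obtain ⟨L, hL1, hL2⟩ := factor_list C l (fun v hv => hDC v (hl2 v hv))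
      have hjoin : L.flatten = [w] := by
        apply hC
        · intro u hu
          obtain ⟨m, hm, hu⟩ := List.mem_flatten.mp hu
          exact (hL1 m hm).2 u hu
        · intro u hu
          simp at hu; rwa [hu]
        · rw [List.prod_flatten, hL2, hl3]; simp
      match L, hjoin, hL1, hL2 with
      | [m], hjoin, hL1, hL2 =>
        simp only [List.flatten, List.append_eq, List.append_nil] at hjoin
        have hv : m.prod = w := by rw [hjoin]; simp
        have hlw : l = [w] := by
          rw [← hL2]; simp [hv]
        subst hlw
        simpa using hl2 w (by simp)
      | [], hjoin, _, _ => simp at hjoin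
      | m :: m' :: L, hjoin, hL1, _ =>
        exfalso
        obtain ⟨a, ta, rfl⟩ := List.exists_cons_of_ne_nil ((hL1 m (by simp)).1)
        obtain ⟨b, tb, rfl⟩ := List.exists_cons_of_ne_nil ((hL1 m' (by simp)).1)
        have := congrArg List.length hjoin
        simp [List.length_flatten] at this
    apply Finset.Subset.antisymm
    · exact key C D hC hCD hDC
    · exact key D C hD hDC hCD
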